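/- Let p be a prime and let f : GF(p) → GF(p) be a nonlinear function. Then f determines at least (p+3)/2 directions, i.e., 2·|D_f| ≥ p + 3. -/

import Mathlib

open Polynomial

set_option linter.unusedSectionVars false
set_option maxHeartbeats 1000000

section Helpers

variable {R : Type*} [CommRing R]

lemma natDeg_msum_le (t : Multiset R[X]) (n : ℕ) (h : ∀ q ∈ t, q.natDegree ≤ n) :
    t.sum.natDegree ≤ n := by
  induction t using Multiset.induction_on with
  | empty => simp
  | cons a s ih =>
    rw [Multiset.sum_cons]
    exact (natDegree_add_le _ _).trans (max_le (h a (Multiset.mem_cons_self a s))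
      (ih fun q hq => h q (Multiset.mem_cons_of_mem hq)))

lemma natDeg_mprod_le (t : Multiset R[X]) (h : ∀ q ∈ t, q.natDegree ≤ 1) :
    t.prod.natDegree ≤ Multiset.card t := by
  refine (natDegree_multiset_prod_le t).trans ?_
  calc (t.map natDegree).sum ≤ (Multiset.card (t.map natDegree)) • 1 :=
        Multiset.sum_le_card_nsmul _ 1 (by simpa using h)
    _ = Multiset.card t := by simp

lemma coeff_mul_top {a P : R[X]} {n : ℕ} (ha : a.natDegree ≤ 1) (hP : P.natDegree ≤ n) :
    (a * P).coeff (n + 1) = a.coeff 1 * P.coeff n := by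
  rw [coeff_mul]
  rw [Finset.sum_eq_single (1, n)]
  · intro b hb hne
    rcases b with ⟨i, j⟩
    simp only [Finset.HasAntidiagonal.mem_antidiagonal] at hb
    rcases Nat.lt_or_ge 1 i with hi | hi
    · rw [coeff_eq_zero_of_natDegree_lt (lt_of_le_of_lt ha hi), zero_mul]
    · interval_cases i
      · rw [coeff_eq_zero_of_natDegree_lt (lt_of_le_of_lt hP (by omega)), mul_zero]
      · have : j = n := by omega
        subst this
        simp at hne
  · intro h
    simp only [Finset.HasAntidiagonal.mem_antidiagonal] at h
    omega

lemma mprod_coeff_top (t : Multiset R[X]) (h : ∀ q ∈ t, q.natDegree ≤ 1) :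
    t.prod.coeff (Multiset.card t) = (t.map (fun q => q.coeff 1)).prod := by
  induction t using Multiset.induction_on with
  | empty => simp
  | cons a s ih =>
    rw [Multiset.prod_cons, Multiset.card_cons,
      coeff_mul_top (h a (Multiset.mem_cons_self a s))
        (natDeg_mprod_le s fun q hq => h q (Multiset.mem_cons_of_mem hq)),
      Multiset.map_cons, Multiset.prod_cons,
      ih fun q hq => h q (Multiset.mem_cons_of_mem hq)]

section FF
variable {F : Type} [Field F] [Fintype F] [DecidableEq F]

lemma prod_univ_X_sub_C :
    ((Finset.univ.val : Multiset F).map fun a => X - C a).prod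
      = X ^ (Fintype.card F) - X := by
  have h1 : (X ^ (Fintype.card F) - X : F[X]).roots = Finset.univ.val :=
    FiniteField.roots_X_pow_card_sub_X F
  have hm : (X ^ (Fintype.card F) - X : F[X]).Monic := by
    have hd := FiniteField.X_pow_card_sub_X_natDegree_eq (K' := F) (Fintype.one_lt_card : 1 < Fintype.card F)
    unfold Polynomial.Monic
    rw [Polynomial.leadingCoeff, hd]
    rw [Polynomial.coeff_sub, Polynomial.coeff_X_pow, if_pos rfl, Polynomial.coeff_X,
      if_neg (by have h : (1:ℕ) < Fintype.card F := Fintype.one_lt_card; omega)]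
    ring
  have := prod_multiset_X_sub_C_of_monic_of_roots_card_eq hm
    (by rw [h1, FiniteField.X_pow_card_sub_X_natDegree_eq (K' := F) (Fintype.one_lt_card : 1 < Fintype.card F)]; simp)
  rw [h1] at this
  exact this

lemma prod_univ_X_add_C :
    ((Finset.univ.val : Multiset F).map fun a => X + C a).prod
      = X ^ (Fintype.card F) - X := by
  have hneg : (Finset.univ.val : Multiset F).map (fun a => -a) = Finset.univ.val := by
    have : (Finset.univ.map (Equiv.neg F).toEmbedding) = Finset.univ := Finset.map_univ_equiv _
    calc (Finset.univ.val : Multiset F).map (fun a => -a)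
        = (Finset.univ.map (Equiv.neg F).toEmbedding).val := rfl
      _ = Finset.univ.val := by rw [this]
  calc ((Finset.univ.val : Multiset F).map fun a => X + C a).prod
      = (((Finset.univ.val : Multiset F).map (fun a => -a)).map fun a => X - C a).prod := by
        rw [Multiset.map_map]
        congr 1
        refine Multiset.map_congr rfl fun x _ => ?_
        simp [sub_neg_eq_add]
    _ = X ^ (Fintype.card F) - X := by rw [hneg, prod_univ_X_sub_C]

lemma esymm_univ_eq_zero {j : ℕ} (h1 : 1 ≤ j) (h2 : j ≤ Fintype.card F - 2) :
    (Finset.univ.val : Multiset F).esymm j = 0 := by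
  have hcard : (Multiset.card (Finset.univ.val : Multiset F)) = Fintype.card F := by simp
  have hp2 : (1:ℕ) < Fintype.card F := Fintype.one_lt_card
  have hk : Fintype.card F - j ≤ Multiset.card (Finset.univ.val : Multiset F) := by omega
  have := Multiset.prod_X_add_C_coeff (Finset.univ.val : Multiset F) hk
  rw [prod_univ_X_add_C, hcard] at this
  have hj : Fintype.card F - (Fintype.card F - j) = j := by omega
  rw [hj] at this
  rw [← this, Polynomial.coeff_sub, Polynomial.coeff_X_pow,
    if_neg (by omega), Polynomial.coeff_X, if_neg (by omega)]
  ring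
end FF

end Helpers

theorem directions_prime_case (p : ℕ) (hp : p.Prime)
    (F : Type) [Field F] [Fintype F] (hF : Fintype.card F = p)
    (f : F → F) (hnl : ¬∃ a b : F, ∀ x : F, f x = a * x + b) :
    2 * Set.ncard {m : F | ∃ u v : F, u ≠ v ∧ m = (f u - f v) / (u - v)} ≥ p + 3 := by
  classical
  by_contra hcon
  push_neg at hcon
  set D : Set F := {m : F | ∃ u v : F, u ≠ v ∧ m = (f u - f v) / (u - v)} with hD
  -- pow_card
  have hpowcard : ∀ a : F, a ^ p = a := by
    intro a; rw [← hF]; exact FiniteField.pow_card a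
  -- p = 2 impossible
  have hp2 : p ≠ 2 := by
    intro h2
    apply hnl
    refine ⟨f 1 - f 0, f 0, fun x => ?_⟩
    have hx : x * (x - 1) = 0 := by
      have hxx := hpowcard x
      rw [h2] at hxx
      linear_combination hxx
    rcases mul_eq_zero.mp hx with h0 | h1
    · rw [h0]; ring
    · have : x = 1 := by linear_combination h1
      rw [this]; ring
  have hp3 : 3 ≤ p := by
    have := hp.two_le
    rcases Nat.lt_or_ge p 3 with h | h
    · interval_cases p
      · exact absurd rfl hp2
    · exact h
  -- characterizations of D
  have hmemD : ∀ (m u v : F), u ≠ v → f u - m * u = f v - m * v → m ∈ D := by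
    intro m u v huv heq
    refine ⟨u, v, huv, ?_⟩
    have hsub : u - v ≠ 0 := sub_ne_zero_of_ne huv
    field_simp
    linear_combination -heq
  have hslope : ∀ (m u v : F), u ≠ v → m = (f u - f v) / (u - v) →
      f u - m * u = f v - m * v := by
    intro m u v huv hm
    have hsub : u - v ≠ 0 := sub_ne_zero_of_ne huv
    have : m * (u - v) = f u - f v := by
      rw [hm]; field_simp
    linear_combination -this
  set Dfin : Finset F := Finset.univ.filter (· ∈ D) with hDfin
  have hDcoe : D = ↑Dfin := by
    ext m; simp [hDfin]
  have hncard : D.ncard = Dfin.card := by rw [hDcoe, Set.ncard_coe_finset]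
  set d : ℕ := Dfin.card with hd
  have hdp : 2 * d < p + 3 := by rw [← hncard]; exact hcon
  -- d ≥ 1
  have hd1 : 1 ≤ d := by
    have h01 : (0 : F) ≠ 1 := zero_ne_one
    have : ((f 0 - f 1) / (0 - 1)) ∈ Dfin := by
      simp only [hDfin, Finset.mem_filter, Finset.mem_univ, true_and]
      exact ⟨0, 1, h01, rfl⟩
    exact Finset.card_pos.mpr ⟨_, this⟩
  -- d ≥ 2
  have hd2 : 2 ≤ d := by
    rcases Nat.lt_or_ge d 2 with hlt | h
    · exfalso
      have hd1' : d = 1 := by omega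
      obtain ⟨m₀, hm₀⟩ := Finset.card_eq_one.mp (by omega : Dfin.card = 1)
      apply hnl
      refine ⟨m₀, f 0, fun x => ?_⟩
      rcases eq_or_ne x 0 with rfl | hx
      · ring
      · have hmem : ((f x - f 0) / (x - 0)) ∈ Dfin := by
          simp only [hDfin, Finset.mem_filter, Finset.mem_univ, true_and]
          exact ⟨x, 0, hx, rfl⟩
        rw [hm₀] at hmem
        have heq : (f x - f 0) / (x - 0) = m₀ := Finset.mem_singleton.mp hmem
        have := hslope _ x 0 hx heq.symm
        linear_combination this
    · exact h
  
  -- basic cardinalities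
  have hdlep : d ≤ p := by
    rw [← hF]
    exact le_trans (Finset.card_le_card (Finset.subset_univ _)) (le_of_eq Finset.card_univ)
  have hdp1 : d ≤ p - 1 := by omega
  -- the Rédei polynomial
  set φ : F → F[X] := fun x => C x * X - C (f x) with hφ
  set Rm : Multiset F[X] := Finset.univ.val.map φ with hRm
  set H : Polynomial F[X] := (Rm.map fun r => X + C r).prod with hH
  have hcardu : Multiset.card (Finset.univ.val : Multiset F) = p := by
    rw [← hF]; exact Finset.card_univ
  have hcardRm : Multiset.card Rm = p := by rw [hRm, Multiset.card_map, hcardu]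
  have hφdeg1 : ∀ x : F, (φ x).natDegree ≤ 1 := by
    intro x
    refine (natDegree_sub_le _ _).trans ?_
    have h1 : (C x * X : F[X]).natDegree ≤ 1 :=
      (natDegree_C_mul_le x X).trans (le_of_eq natDegree_X)
    have h2 : (C (f x) : F[X]).natDegree = 0 := natDegree_C _
    omega
  have hφdeg : ∀ r ∈ Rm, r.natDegree ≤ 1 := by
    intro r hr
    rw [hRm] at hr
    obtain ⟨x, _, rfl⟩ := Multiset.mem_map.mp hr
    exact hφdeg1 x
  have hφtop : ∀ x : F, (φ x).coeff 1 = x := by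
    intro x
    rw [hφ]
    simp [coeff_C]
  have hHcoeff : ∀ k, k ≤ p → H.coeff k = Rm.esymm (p - k) := by
    intro k hk
    rw [hH, Multiset.prod_X_add_C_coeff Rm (le_trans hk (le_of_eq hcardRm.symm)), hcardRm]
  have hesymm_deg : ∀ j, (Rm.esymm j).natDegree ≤ j := by
    intro j
    rw [Multiset.esymm]
    refine natDeg_msum_le _ _ ?_
    intro q hq
    obtain ⟨u, hu, rfl⟩ := Multiset.mem_map.mp hq
    rw [Multiset.mem_powersetCard] at hu
    exact le_trans (natDeg_mprod_le u fun r hr => hφdeg r (Multiset.mem_of_le hu.1 hr))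
      (le_of_eq hu.2)
  have hesymm_top : ∀ j, (Rm.esymm j).coeff j = (Finset.univ.val : Multiset F).esymm j := by
    intro j
    rw [Multiset.esymm, Multiset.esymm]
    have hsum := map_multiset_sum (Polynomial.lcoeff F j) ((Rm.powersetCard j).map Multiset.prod)
    simp only [Polynomial.lcoeff_apply] at hsum
    rw [hsum, Multiset.map_map, hRm, Multiset.powersetCard_map, Multiset.map_map]
    congr 1
    refine Multiset.map_congr rfl fun v hv => ?_
    rw [Multiset.mem_powersetCard] at hv
    simp only [Function.comp_apply]
    have hcard1 : Multiset.card (v.map φ) = j := by rw [Multiset.card_map, hv.2]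
    have hstep : (Multiset.map φ v).prod.coeff j
        = ((Multiset.map φ v).map fun q => q.coeff 1).prod := by
      rw [← hcard1]
      exact mprod_coeff_top _ fun r hr => by
        obtain ⟨x, _, rfl⟩ := Multiset.mem_map.mp hr
        exact hφdeg1 x
    rw [Polynomial.lcoeff_apply, hstep, Multiset.map_map]
    calc (v.map fun x => (φ x).coeff 1).prod = (v.map fun x => x).prod := by
          rw [Multiset.map_congr rfl fun x _ => hφtop x]
      _ = v.prod := by rw [Multiset.map_id']
  have hHdeg' : ∀ k, 2 ≤ k → k ≤ p - 1 → (H.coeff k).natDegree ≤ p - k - 1 := by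
    intro k h2 h3
    rw [natDegree_le_iff_coeff_eq_zero]
    intro N hN
    rcases eq_or_lt_of_le (by omega : p - k ≤ N) with rfl | hlt
    · rw [hHcoeff k (by omega), hesymm_top]
      exact esymm_univ_eq_zero (by omega) (by rw [hF]; omega)
    · exact coeff_eq_zero_of_natDegree_lt
        (lt_of_le_of_lt (le_trans (hHcoeff k (by omega) ▸ hesymm_deg (p - k)) le_rfl) hlt)
  -- evaluation of the Rédei polynomial
  have hHeval : ∀ m : F, H.map (evalRingHom m)
      = ((Finset.univ.val.map fun x => f x - m * x).map fun a => X - C a).prod := by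
    intro m
    rw [hH, Polynomial.map_multiset_prod, Multiset.map_map, hRm, Multiset.map_map,
      Multiset.map_map]
    congr 1
    refine Multiset.map_congr rfl fun x _ => ?_
    simp only [Function.comp_apply]
    show ((X + C (φ x)).map (evalRingHom m)) = X - C (f x - m * x)
    rw [Polynomial.map_add, Polynomial.map_X, Polynomial.map_C]
    have hev : evalRingHom m (φ x) = x * m - f x := by
      rw [hφ]
      simp only [coe_evalRingHom, eval_sub, eval_mul, eval_C, eval_X]
    rw [hev, show x * m - f x = -(f x - m * x) by ring, map_neg, ← sub_eq_add_neg]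
  have hXpX : ((Finset.univ.val : Multiset F).map fun a => X - C a).prod = (X : F[X]) ^ p - X := by
    rw [prod_univ_X_sub_C, hF]
  have hnotD : ∀ m : F, m ∉ D →
      (Finset.univ.val.map fun x => f x - m * x) = Finset.univ.val := by
    intro m hm
    have hinj : Function.Injective (fun x : F => f x - m * x) := by
      intro a b hab
      by_contra hne
      exact hm (hmemD m a b hne (by simpa using hab))
    have huniv : (Finset.univ.map ⟨_, hinj⟩ : Finset F) = Finset.univ :=
      Finset.eq_univ_of_card _ (by rw [Finset.card_map, Finset.card_univ])
    calc (Finset.univ.val.map fun x => f x - m * x)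
        = (Finset.univ.map ⟨fun x : F => f x - m * x, hinj⟩).val := rfl
      _ = Finset.univ.val := by rw [huniv]
  have hcompl : (Dfinᶜ : Finset F).card = p - d := by rw [Finset.card_compl, hF, hd]
  have hHzero : ∀ k, d ≤ k → k ≤ p - 1 → H.coeff k = 0 := by
    intro k hk1 hk2
    refine eq_zero_of_natDegree_lt_card_of_eval_eq_zero' (H.coeff k) Dfinᶜ ?_ ?_
    · intro m hm
      have hmD : m ∉ D := by
        have := Finset.mem_compl.mp hm
        simpa [hDfin] using this
      have hcm : eval m (H.coeff k) = (H.map (evalRingHom m)).coeff k := by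
        rw [coeff_map, coe_evalRingHom]
      rw [hcm, hHeval m, hnotD m hmD, hXpX, coeff_sub, coeff_X_pow, if_neg (by omega),
        coeff_X, if_neg (by omega)]
      ring
    · rw [hcompl]
      exact lt_of_le_of_lt (hHdeg' k (by omega) hk2) (by omega)
  -- pick a direction m₀
  obtain ⟨m₀, hm₀D⟩ := Finset.card_pos.mp (show 0 < Dfin.card by omega)
  have hm₀ : m₀ ∈ D := by
    rw [hDfin] at hm₀D
    exact (Finset.mem_filter.mp hm₀D).2
  obtain ⟨u, v, huv, hm₀eq⟩ := hm₀
  have hcol : f u - m₀ * u = f v - m₀ * v := hslope m₀ u v huv hm₀eq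
  set V : Multiset F := Finset.univ.val.map (fun x => f x - m₀ * x) with hV
  set h : F[X] := (V.map fun a => X - C a).prod with hh
  have hVcard : Multiset.card V = p := by rw [hV, Multiset.card_map, hcardu]
  have hhmap : h = H.map (evalRingHom m₀) := (hHeval m₀).symm
  have hmonic : h.Monic := monic_multiset_prod_of_monic _ _ fun a _ => monic_X_sub_C a
  have hhdeg : h.natDegree = p := by
    rw [hh, natDegree_multiset_prod_X_sub_C_eq_card]
    exact hVcard
  have hroots : h.roots = V := by rw [hh]; exact roots_multiset_prod_X_sub_C V
  have hhzero : ∀ k, d ≤ k → k ≤ p - 1 → h.coeff k = 0 := by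
    intro k hk1 hk2
    rw [hhmap, coeff_map, hHzero k hk1 hk2, map_zero]
  set g : F[X] := h - X ^ p with hg
  have hgcoeff : ∀ k, d ≤ k → g.coeff k = 0 := by
    intro k hk
    rw [hg, coeff_sub, coeff_X_pow]
    rcases lt_trichotomy k p with h1 | rfl | h1
    · rw [hhzero k hk (by omega), if_neg (by omega)]; ring
    · rw [if_pos rfl]
      have hcp : h.coeff k = 1 := by
        have := hmonic.coeff_natDegree
        rwa [hhdeg] at this
      rw [hcp]; ring
    · rw [coeff_eq_zero_of_natDegree_lt (by omega : h.natDegree < k), if_neg (by omega)]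
      ring
  have hgdeg : g.natDegree ≤ d - 1 := by
    rw [natDegree_le_iff_coeff_eq_zero]
    intro N hN
    exact hgcoeff N (by omega)
  have hhXg : h = X ^ p + g := by rw [hg]; ring
  have hpzero : ((p : ℕ) : F) = 0 := by rw [← hF]; exact FiniteField.cast_card_eq_zero F
  have hderiv : derivative h = derivative g := by
    rw [hhXg, derivative_add, derivative_X_pow, hpzero, map_zero, zero_mul, zero_add]
  have hringchar : ringChar F = p := CharP.ringChar_of_prime_eq_zero hp hpzero
  -- the repeated value
  set a₀ : F := f u - m₀ * u with ha₀
  have hcount2 : 2 ≤ V.count a₀ := by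
    rw [hV, Multiset.count_map]
    have hfin : (Multiset.filter (fun x => a₀ = f x - m₀ * x) Finset.univ.val)
        = (Finset.filter (fun x => a₀ = f x - m₀ * x) Finset.univ).val := rfl
    rw [hfin]
    have hlt : 1 < (Finset.filter (fun x => a₀ = f x - m₀ * x) Finset.univ).card := by
      rw [Finset.one_lt_card]
      refine ⟨u, Finset.mem_filter.mpr ⟨Finset.mem_univ u, rfl⟩,
        v, Finset.mem_filter.mpr ⟨Finset.mem_univ v, hcol⟩, huv⟩
    exact hlt
  set S : Finset F := V.toFinset with hS
  have hSroot : ∀ a ∈ S, (g + X).eval a = 0 := by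
    intro a ha
    have haV : a ∈ V := Multiset.mem_toFinset.mp ha
    have haroot : h.eval a = 0 := by
      rw [← hroots] at haV
      exact (mem_roots'.mp haV).2
    rw [hhXg] at haroot
    simp only [eval_add, eval_pow, eval_X] at haroot
    rw [hpowcard a] at haroot
    simp only [eval_add, eval_X]
    linear_combination haroot
  have hgX0 : g + X ≠ 0 := by
    intro h0
    have hgeq : g = -X := by linear_combination (h0 : g + X = 0)
    have hXX : h = X ^ p - X := by rw [hhXg, hgeq]; ring
    have hrootsu : h.roots = Finset.univ.val := by
      rw [hXX, ← hF]; exact FiniteField.roots_X_pow_card_sub_X F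
    have hnodup : V.Nodup := by rw [← hroots, hrootsu]; exact Finset.univ.nodup
    have := Multiset.nodup_iff_count_le_one.mp hnodup a₀
    omega
  have hScard : S.card ≤ d - 1 := by
    have h1 : S ⊆ (g + X).roots.toFinset := by
      intro a ha
      rw [Multiset.mem_toFinset, mem_roots hgX0]
      exact hSroot a ha
    calc S.card ≤ (g + X).roots.toFinset.card := Finset.card_le_card h1
      _ ≤ Multiset.card (g + X).roots := Multiset.toFinset_card_le _
      _ ≤ (g + X).natDegree := card_roots' _
      _ ≤ d - 1 := by
          refine (natDegree_add_le _ _).trans ?_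
          rw [natDegree_X]
          exact max_le hgdeg (by omega)
  set W : Multiset F := V - S.val with hW
  have hSval : S.val ≤ V := by
    rw [hS, Multiset.toFinset_val]
    exact Multiset.dedup_le V
  have hWcard : Multiset.card W = p - S.card := by
    rw [hW, Multiset.card_sub hSval, hVcard]; rfl
  set w : F[X] := (W.map fun a => X - C a).prod with hw
  have hwdeg : w.natDegree = Multiset.card W := by
    rw [hw, natDegree_multiset_prod_X_sub_C_eq_card]
  have hWS : W.toFinset ⊆ S := by
    intro a ha
    rw [Multiset.mem_toFinset] at ha
    exact Multiset.mem_toFinset.mpr (Multiset.mem_of_le (Multiset.sub_le_self _ _) ha)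
  have hwprod : w = ∏ a ∈ S, (X - C a) ^ (W.count a) := by
    rw [hw, Finset.prod_multiset_map_count]
    exact Finset.prod_subset hWS fun a _ hna => by
      rw [Multiset.count_eq_zero_of_notMem fun hmem => hna (Multiset.mem_toFinset.mpr hmem),
        pow_zero]
  have hwdvd : w ∣ derivative h := by
    rw [hwprod]
    refine Finset.prod_dvd_of_coprime ?_ ?_
    · intro a ha b hb hab
      exact ((pairwise_coprime_X_sub_C Function.injective_id hab).pow)
    · intro a ha
      have haV : a ∈ V := Multiset.mem_toFinset.mp ha
      have hμ : 1 ≤ V.count a := Multiset.one_le_count_iff_mem.mpr haV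
      have hWc : W.count a = V.count a - 1 := by
        rw [hW, Multiset.count_sub, hS, Multiset.toFinset_val,
          Multiset.count_dedup, if_pos haV]
      have hsplit : V = Multiset.replicate (V.count a) a
          + Multiset.filter (fun x => ¬ x = a) V := by
        conv_lhs => rw [← Multiset.filter_add_not (fun x => x = a) V]
        congr 1
        exact Multiset.filter_eq' V a
      have hhfac : h = (X - C a) ^ (V.count a)
          * ((Multiset.filter (fun x => ¬ x = a) V).map fun b => X - C b).prod := by
        rw [hh]
        conv_lhs => rw [hsplit]
        rw [Multiset.map_add, Multiset.prod_add, Multiset.map_replicate,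
          Multiset.prod_replicate]
      rw [hhfac, derivative_mul, derivative_pow, derivative_sub, derivative_X, derivative_C,
        sub_zero, mul_one, hWc]
      refine dvd_add ?_ ?_
      · exact ((dvd_mul_left _ _).mul_right _)
      · exact ((pow_dvd_pow _ (by omega)).mul_right _)
  -- final case split
  by_cases hg' : derivative g = 0
  · -- g is a constant, so f is linear: contradiction
    have hgnat : g.natDegree = 0 := by
      by_contra hne
      have hgne : g ≠ 0 := fun h0 => hne (by rw [h0]; simp)
      have hlc : g.coeff g.natDegree ≠ 0 := by
        rw [← leadingCoeff]
        exact leadingCoeff_ne_zero.mpr hgne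
      have hcd := coeff_derivative g (g.natDegree - 1)
      rw [hg', coeff_zero] at hcd
      have hrw : g.natDegree - 1 + 1 = g.natDegree := by omega
      rw [hrw] at hcd
      have hcast : ((g.natDegree - 1 : ℕ) : F) + 1 = ((g.natDegree : ℕ) : F) := by
        rw [← Nat.cast_add_one, hrw]
      rw [hcast] at hcd
      have hnz : ((g.natDegree : ℕ) : F) = 0 := by
        rcases mul_eq_zero.mp hcd.symm with h0 | h0
        · exact absurd h0 hlc
        · exact h0
      have hdvd : p ∣ g.natDegree := by
        rw [← hringchar]
        exact ringChar.dvd hnz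
      have : p ≤ g.natDegree := Nat.le_of_dvd (by omega) hdvd
      omega
    obtain ⟨c, hc⟩ := natDegree_eq_zero.mp hgnat
    apply hnl
    refine ⟨m₀, -c, fun x => ?_⟩
    have hxV : (f x - m₀ * x) ∈ V := by
      rw [hV]
      exact Multiset.mem_map_of_mem _ (Finset.mem_univ x)
    have := hSroot (f x - m₀ * x) (Multiset.mem_toFinset.mpr hxV)
    rw [← hc] at this
    simp only [eval_add, eval_C, eval_X] at this
    linear_combination this
  · -- the counting contradiction
    have hgnat1 : g.natDegree ≠ 0 := by
      intro h0
      obtain ⟨c, hc⟩ := natDegree_eq_zero.mp h0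
      rw [← hc, derivative_C] at hg'
      exact hg' rfl
    have h1 : (derivative g).natDegree < g.natDegree := natDegree_derivative_lt hgnat1
    have h2 : Multiset.card W ≤ (derivative g).natDegree := by
      rw [← hwdeg]
      exact natDegree_le_of_dvd (hderiv ▸ hwdvd) hg'
    have h3 : Multiset.card W = p - S.card := hWcard
    have h4 : S.card ≤ p := by
      calc S.card ≤ d - 1 := hScard
        _ ≤ p := by omega
    omega
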